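/- Let g : Z → Y be an s-fibration between compact ergodic gluing cubespaces. Then for each a in the top structure group A_s(g), the map f_a : Z → Z, f_a(z) = a·z, is an element of Aut_s(g); i.e., A_s(g) embeds into the s-th translation group of g. Consequently A_s(g) commutes with Aut_k(g) for every k ≥ 1. -/

import Mathlib

open Function Set

/-- The all-ones vertex `1⃗` of the discrete cube `{0,1}^k`. -/
def topVtx (k : ℕ) : Fin k → Bool := fun _ => true

/-- A family of cube sets on a space `X`: for each `k`, a set of `k`-configurations. -/
structure CubeFamily (X : Type*) where
  cubes : ∀ k : ℕ, Set ((Fin k → Bool) → X)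

/-- A morphism of discrete cubes: each coordinate function is constantly `0`,
constantly `1`, a coordinate `ω i`, or a negated coordinate `!ω i`. -/
def IsDiscreteCubeMorphism {k l : ℕ} (ρ : (Fin k → Bool) → (Fin l → Bool)) : Prop :=
  ∀ j : Fin l, (∀ ω, ρ ω j = false) ∨ (∀ ω, ρ ω j = true) ∨
    (∃ i : Fin k, ∀ ω, ρ ω j = ω i) ∨ (∃ i : Fin k, ∀ ω, ρ ω j = !(ω i))

/-- The cubespace axioms: cube sets are closed, `C^0(X) = X`, and cubes are stable
under precomposition with morphisms of discrete cubes. -/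
def CubeFamily.IsCubespace {X : Type*} [TopologicalSpace X] (S : CubeFamily X) : Prop :=
  (∀ k, IsClosed (S.cubes k)) ∧ S.cubes 0 = Set.univ ∧
    ∀ {k l : ℕ} (ρ : (Fin k → Bool) → (Fin l → Bool)), IsDiscreteCubeMorphism ρ →
      ∀ c ∈ S.cubes l, (fun ω => c (ρ ω)) ∈ S.cubes k

/-- A cubespace morphism: a continuous map sending cubes to cubes. -/
def IsMorphism {X Y : Type*} [TopologicalSpace X] [TopologicalSpace Y]
    (S : CubeFamily X) (T : CubeFamily Y) (f : X → Y) : Prop :=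
  Continuous f ∧ ∀ k, ∀ c ∈ S.cubes k, (fun ω => f (c ω)) ∈ T.cubes k

/-- `lam` is a `k`-corner: each lower face `{ω : ω i = 0}` restricts to a `(k-1)`-cube.
(The restriction of `lam` to the face `{ω : ω i = 0}` is a `(k-1)`-cube iff the
degenerate configuration `ω ↦ lam (update ω i false)` is a `k`-cube, by the
discrete-cube-morphism axiom; the value of `lam` at `topVtx k` is irrelevant here.) -/
def IsCubeCorner {X : Type*} (S : CubeFamily X) {k : ℕ} (lam : (Fin k → Bool) → X) : Prop :=
  ∀ i : Fin k, (fun ω => lam (Function.update ω i false)) ∈ S.cubes k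

/-- Relative `k`-completion for `f : X → Y`: every `k`-corner in `X` whose `f`-image
extends to a `k`-cube `c` of `Y` can be completed to a `k`-cube of `X` lying over `c`. -/
def HasCompletionAt {X Y : Type*} (S : CubeFamily X) (T : CubeFamily Y) (f : X → Y)
    (k : ℕ) : Prop :=
  ∀ (lam : (Fin k → Bool) → X) (c : (Fin k → Bool) → Y), IsCubeCorner S lam → c ∈ T.cubes k →
    (∀ ω, ω ≠ topVtx k → f (lam ω) = c ω) →
    ∃ c₀ ∈ S.cubes k, (∀ ω, ω ≠ topVtx k → c₀ ω = lam ω) ∧ (fun ω => f (c₀ ω)) = c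

/-- A fibration: a cubespace morphism with `k`-completion for all `k ≥ 0`. -/
def IsFibration {X Y : Type*} [TopologicalSpace X] [TopologicalSpace Y]
    (S : CubeFamily X) (T : CubeFamily Y) (f : X → Y) : Prop :=
  IsMorphism S T f ∧ ∀ k, HasCompletionAt S T f k

/-- Relative `k`-uniqueness: two `k`-cubes agreeing off the top vertex with equal
`f`-images are equal. -/
def HasUniquenessAt {X Y : Type*} (S : CubeFamily X) (T : CubeFamily Y) (f : X → Y)
    (k : ℕ) : Prop :=
  ∀ c ∈ S.cubes k, ∀ c' ∈ S.cubes k, (∀ ω, ω ≠ topVtx k → c ω = c' ω) →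
    (fun ω => f (c ω)) = (fun ω => f (c' ω)) → c = c'

/-- An `s`-fibration: a fibration with `(s+1)`-uniqueness. -/
def IsSFibration {X Y : Type*} [TopologicalSpace X] [TopologicalSpace Y]
    (S : CubeFamily X) (T : CubeFamily Y) (f : X → Y) (s : ℕ) : Prop :=
  IsFibration S T f ∧ HasUniquenessAt S T f (s + 1)

/-- Absolute fibrancy: every `k`-corner completes to a `k`-cube. -/
def IsFibrant {X : Type*} (S : CubeFamily X) : Prop :=
  ∀ (k : ℕ) (lam : (Fin k → Bool) → X), IsCubeCorner S lam →
    ∃ c₀ ∈ S.cubes k, ∀ ω, ω ≠ topVtx k → c₀ ω = lam ω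

/-- Absolute `k`-uniqueness. -/
def HasUnique {X : Type*} (S : CubeFamily X) (k : ℕ) : Prop :=
  ∀ c ∈ S.cubes k, ∀ c' ∈ S.cubes k, (∀ ω, ω ≠ topVtx k → c ω = c' ω) → c = c'

/-- Ergodicity: every pair of points is a `1`-cube. -/
def IsErgodic {X : Type*} (S : CubeFamily X) : Prop := S.cubes 1 = Set.univ

/-- Concatenation `[c₁, c₂]` of two `k`-configurations along the last coordinate. -/
def concatCube {X : Type*} {k : ℕ} (c₁ c₂ : (Fin k → Bool) → X) :
    (Fin (k + 1) → Bool) → X :=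
  fun ω => if ω (Fin.last k) = true then c₂ (fun i => ω i.castSucc)
           else c₁ (fun i => ω i.castSucc)

/-- The gluing property. -/
def IsGluing {X : Type*} (S : CubeFamily X) : Prop :=
  ∀ (k : ℕ) (c₁ c₂ c₃ : (Fin k → Bool) → X), c₁ ∈ S.cubes k → c₂ ∈ S.cubes k →
    c₃ ∈ S.cubes k → concatCube c₁ c₂ ∈ S.cubes (k + 1) →
    concatCube c₂ c₃ ∈ S.cubes (k + 1) → concatCube c₁ c₃ ∈ S.cubes (k + 1)

/-- The `s`-th canonical relation `x ∼ₛ x'`. -/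
def CanonRel {X : Type*} (S : CubeFamily X) (s : ℕ) (x x' : X) : Prop :=
  ∃ c ∈ S.cubes (s + 1), ∃ c' ∈ S.cubes (s + 1),
    (∀ ω, ω ≠ topVtx (s + 1) → c ω = c' ω) ∧ c (topVtx (s + 1)) = x ∧ c' (topVtx (s + 1)) = x'

/-- The `s`-th canonical relation relative to `f` : `x ∼_{f,s} x'`. -/
def RelCanonRel {X Y : Type*} (S : CubeFamily X) (f : X → Y) (s : ℕ) (x x' : X) : Prop :=
  CanonRel S s x x' ∧ f x = f x'

/-- `F ⊆ {0,1}^n` is a face of codimension `k`: obtained by fixing the values of `k`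
coordinates. -/
def IsFaceOfCodim {n : ℕ} (F : Set (Fin n → Bool)) (k : ℕ) : Prop :=
  ∃ (I : Finset (Fin n)) (b : Fin n → Bool), I.card = k ∧ F = {ω | ∀ i ∈ I, ω i = b i}

open Classical in
/-- Modify the configuration `c` by applying `φ` on the face `F`. -/
noncomputable def faceModify {X : Type*} {n : ℕ} (F : Set (Fin n → Bool)) (φ : X → X)
    (c : (Fin n → Bool) → X) : (Fin n → Bool) → X :=
  fun ω => if ω ∈ F then φ (c ω) else c ω

/-- `φ` is a `k`-translation of the cubespace `S`: a cubespace automorphism such that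
modifying any `n`-cube (`n ≥ k`) by `φ` along any codimension-`k` face yields a cube. -/
def IsTranslationOf {X : Type*} (S : CubeFamily X) (φ : X → X) (k : ℕ) : Prop :=
  (∀ (n : ℕ) (c : (Fin n → Bool) → X), c ∈ S.cubes n ↔ (fun ω => φ (c ω)) ∈ S.cubes n) ∧
  ∀ (n : ℕ), k ≤ n → ∀ F : Set (Fin n → Bool), IsFaceOfCodim F k →
    ∀ c ∈ S.cubes n, faceModify F φ c ∈ S.cubes n

/-- The subcubespace on a subset `A ⊆ X`: cubes of `X` taking values in `A`. -/
def subFamily {X : Type*} (S : CubeFamily X) (A : Set X) : CubeFamily X :=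
  ⟨fun k => {c | c ∈ S.cubes k ∧ ∀ ω, c ω ∈ A}⟩

/-- `u` belongs to the `k`-th translation group `Aut_k(g)` of a map `g : X → Z`: it is
a homeomorphism of `X` fixing the fibers of `g` and restricting to a `k`-translation of
each subcubespace `g⁻¹(z)`. -/
def MemAut {X Z : Type*} [TopologicalSpace X] (S : CubeFamily X) (g : X → Z)
    (u : X → X) (k : ℕ) : Prop :=
  IsHomeomorph u ∧ (∀ x, g (u x) = g x) ∧
    ∀ z : Z, IsTranslationOf (subFamily S (g ⁻¹' {z})) u k

/-- Constant configurations are cubes. -/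
lemma aux_const_cube {X : Type*} [TopologicalSpace X] {S : CubeFamily X}
    (hS : S.IsCubespace) (n : ℕ) (z : X) :
    (fun _ : Fin n → Bool => z) ∈ S.cubes n := by
  have h0 : (fun _ : Fin 0 → Bool => z) ∈ S.cubes 0 := hS.2.1 ▸ Set.mem_univ _
  exact hS.2.2 (fun _ => Fin.elim0) (fun j => j.elim0) _ h0

/-- Applying `a • ·` to every vertex of a cube yields a cube, given the face
modification hypothesis. -/
lemma aux_smul_cube {Z A : Type*} [TopologicalSpace Z] [CommGroup A] [MulAction A Z]
    {S : CubeFamily Z} (hS : S.IsCubespace) {s : ℕ}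
    (hface : ∀ (n : ℕ) (F : Set (Fin n → Bool)), IsFaceOfCodim F s →
      ∀ c ∈ S.cubes n, ∀ a : A, faceModify F (fun z => a • z) c ∈ S.cubes n)
    (a : A) (n : ℕ) (c : (Fin n → Bool) → Z) (hc : c ∈ S.cubes n) :
    (fun ω => a • c ω) ∈ S.cubes n := by
  classical
  -- extend the cube to dimension `n + s`
  have hρ : IsDiscreteCubeMorphism
      (fun (ω : Fin (n + s) → Bool) (i : Fin n) => ω (Fin.castAdd s i)) :=
    fun j => Or.inr (Or.inr (Or.inl ⟨Fin.castAdd s j, fun ω => rfl⟩))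
  have hc' : (fun ω : Fin (n + s) → Bool => c (fun i => ω (Fin.castAdd s i)))
      ∈ S.cubes (n + s) := hS.2.2 _ hρ c hc
  set c' : (Fin (n + s) → Bool) → Z :=
    fun ω => c (fun i => ω (Fin.castAdd s i)) with hc'def
  set tl : (Fin (n + s) → Bool) → (Fin s → Bool) :=
    fun ω i => ω (Fin.natAdd n i) with htl
  have hFace : ∀ b : Fin s → Bool,
      IsFaceOfCodim {ω : Fin (n + s) → Bool | tl ω = b} s := by
    intro b
    refine ⟨(Finset.univ : Finset (Fin s)).map ⟨Fin.natAdd n, ?_⟩,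
      Fin.addCases (fun _ => false) b, by simp, ?_⟩
    · intro i j h
      have := congrArg Fin.val h
      simp only [Fin.natAdd] at this
      exact Fin.ext (by omega)
    · ext ω
      simp only [Set.mem_setOf_eq, Finset.mem_map, Finset.mem_univ, true_and,
        Function.Embedding.coeFn_mk]
      constructor
      · rintro h i ⟨j, rfl⟩
        change ω (Fin.natAdd n j) = Fin.addCases (fun _ => false) b (Fin.natAdd n j)
        simp [htl, ← h]
      · intro h
        funext i
        have := h _ ⟨i, rfl⟩
        change ω (Fin.natAdd n i) = Fin.addCases (fun _ => false) b (Fin.natAdd n i) at this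
        simpa [htl] using this
  -- apply `a` on each of the parallel codimension-`s` faces
  have key : ∀ L : List (Fin s → Bool), L.Nodup →
      (fun ω => if tl ω ∈ L then a • c' ω else c' ω) ∈ S.cubes (n + s) := by
    intro L
    induction L with
    | nil => intro _; simpa using hc'
    | cons b L ih =>
      intro hnd
      have hL := ih hnd.of_cons
      have heq : (fun ω => if tl ω ∈ b :: L then a • c' ω else c' ω)
          = faceModify {ω : Fin (n + s) → Bool | tl ω = b} (fun z => a • z)
              (fun ω => if tl ω ∈ L then a • c' ω else c' ω) := by
        funext ω
        by_cases hb : tl ω = b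
        · simp [faceModify, hb, (List.nodup_cons.mp hnd).1]
        · by_cases hL' : tl ω ∈ L <;> simp [faceModify, hb, hL']
      rw [heq]
      exact hface (n + s) _ (hFace b) _ hL a
  have hall : (fun ω => a • c' ω) ∈ S.cubes (n + s) := by
    have := key (Finset.univ : Finset (Fin s → Bool)).toList (Finset.nodup_toList _)
    simpa [Finset.mem_toList] using this
  -- restrict back to dimension `n`
  have hσ : IsDiscreteCubeMorphism
      (fun (ω : Fin n → Bool) =>
        (Fin.addCases ω (fun _ => false) : Fin (n + s) → Bool)) := by
    intro j
    refine Fin.addCases (motive := fun j => (∀ ω : Fin n → Bool,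
        (Fin.addCases ω (fun _ => false) : Fin (n + s) → Bool) j = false) ∨
      (∀ ω : Fin n → Bool,
        (Fin.addCases ω (fun _ => false) : Fin (n + s) → Bool) j = true) ∨
      (∃ i : Fin n, ∀ ω : Fin n → Bool,
        (Fin.addCases ω (fun _ => false) : Fin (n + s) → Bool) j = ω i) ∨
      (∃ i : Fin n, ∀ ω : Fin n → Bool,
        (Fin.addCases ω (fun _ => false) : Fin (n + s) → Bool) j = !(ω i)))
      (fun i => ?_) (fun i => ?_) j
    · exact Or.inr (Or.inr (Or.inl ⟨i, fun ω => by simp⟩))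
    · exact Or.inl (fun ω => by simp)
  have hres := hS.2.2 _ hσ _ hall
  have hid : ∀ ω : Fin n → Bool,
      (fun i => (Fin.addCases ω (fun _ => false) : Fin (n + s) → Bool)
        (Fin.castAdd s i)) = ω := by
    intro ω; funext i; simp
  simpa [hc'def, hid] using hres

/-- Relative uniqueness propagates upward in dimension. -/
lemma aux_uniq_succ {X Y : Type*} [TopologicalSpace X] (S : CubeFamily X)
    (T : CubeFamily Y) (hS : S.IsCubespace) (g : X → Y) {m : ℕ}
    (h : HasUniquenessAt S T g m) : HasUniquenessAt S T g (m + 1) := by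
  classical
  intro c hc c' hc' hagree himg
  have hρ : IsDiscreteCubeMorphism
      (fun (ω : Fin m → Bool) => (Fin.cons true ω : Fin (m + 1) → Bool)) := by
    intro j
    refine Fin.cases ?_ ?_ j
    · exact Or.inr (Or.inl (fun ω => by simp))
    · intro i; exact Or.inr (Or.inr (Or.inl ⟨i, fun ω => by simp⟩))
  have hr : (fun ω => c (Fin.cons true ω)) ∈ S.cubes m := hS.2.2 _ hρ c hc
  have hr' : (fun ω => c' (Fin.cons true ω)) ∈ S.cubes m := hS.2.2 _ hρ c' hc'
  have hag : ∀ ω, ω ≠ topVtx m → c (Fin.cons true ω) = c' (Fin.cons true ω) := by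
    intro ω hω
    apply hagree
    intro hcontra
    apply hω
    funext i
    have := congrFun hcontra i.succ
    simpa [topVtx] using this
  have hkey := h _ hr _ hr' hag (by funext ω; exact congrFun himg _)
  have hconsTop : (Fin.cons true (topVtx m) : Fin (m + 1) → Bool) = topVtx (m + 1) := by
    funext j; refine Fin.cases ?_ ?_ j <;> simp [topVtx]
  have htop : c (topVtx (m + 1)) = c' (topVtx (m + 1)) := by
    have h1 := congrFun hkey (topVtx m)
    simpa [hconsTop] using h1
  funext ω
  by_cases hω : ω = topVtx (m + 1)
  · rw [hω]; exact htop
  · exact hagree ω hω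

/-- let `g : Z → Y` be an `s`-fibration between compact ergodic gluing
cubespaces with top structure group the compact abelian group `A` (acting on `Z`, with
`[a]_F·c` a cube for any codimension-`s` face `F`, and with `a • z ∼_{g,s-1} z`).  Then
for each `a ∈ A` the map `z ↦ a • z` lies in `Aut_s(g)`, i.e. `A` embeds into the
`s`-th translation group of `g`; consequently `A` commutes with `Aut_k(g)` for `k ≥ 1`. -/
theorem structure_group_embeds {Z Y A : Type*}
    [MetricSpace Z] [CompactSpace Z] [MetricSpace Y] [CompactSpace Y]
    [CommGroup A] [TopologicalSpace A] [IsTopologicalGroup A] [CompactSpace A]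
    [MulAction A Z] [ContinuousSMul A Z]
    (S : CubeFamily Z) (T : CubeFamily Y) (hS : S.IsCubespace) (hT : T.IsCubespace)
    (heS : IsErgodic S) (heT : IsErgodic T) (hgS : IsGluing S) (hgT : IsGluing T)
    (g : Z → Y) (s : ℕ) (hs : 1 ≤ s) (hg : IsSFibration S T g s)
    (hface : ∀ (n : ℕ) (F : Set (Fin n → Bool)), IsFaceOfCodim F s →
      ∀ c ∈ S.cubes n, ∀ a : A, faceModify F (fun z => a • z) c ∈ S.cubes n)
    (hrel : ∀ (a : A) (z : Z), RelCanonRel S g (s - 1) z (a • z)) :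
    (∀ a : A, MemAut S g (fun z => a • z) s) ∧
      ∀ (a : A) (k : ℕ), 1 ≤ k → ∀ u : Z → Z, MemAut S g u k →
        ∀ z : Z, a • u z = u (a • z) := by
  classical
  obtain ⟨⟨⟨hgcont, hgcube⟩, hcompl⟩, huniq⟩ := hg
  have hsmul : ∀ (a : A) (n : ℕ), ∀ c ∈ S.cubes n, (fun ω => a • c ω) ∈ S.cubes n :=
    fun a n c hc => aux_smul_cube hS hface a n c hc
  have hgfix : ∀ (a : A) (z : Z), g (a • z) = g z := fun a z => ((hrel a z).2).symm
  have huniq' : ∀ n, s + 1 ≤ n → HasUniquenessAt S T g n := by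
    intro n hn
    induction n, hn using Nat.le_induction with
    | base => exact huniq
    | succ n hn ih => exact aux_uniq_succ S T hS g ih
  have hmem : ∀ a : A, MemAut S g (fun z => a • z) s := by
    intro a
    refine ⟨(Homeomorph.smul a (α := Z)).isHomeomorph, fun z => hgfix a z, ?_⟩
    intro y
    constructor
    · intro n c
      constructor
      · rintro ⟨hc, hv⟩
        refine ⟨hsmul a n c hc, fun ω => ?_⟩
        have := hv ω
        simp only [Set.mem_preimage, Set.mem_singleton_iff, hgfix] at this ⊢
        exact this
      · rintro ⟨hc, hv⟩
        have h2 := hsmul a⁻¹ n _ hc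
        simp only [inv_smul_smul] at h2
        refine ⟨h2, fun ω => ?_⟩
        have := hv ω
        simp only [Set.mem_preimage, Set.mem_singleton_iff, hgfix] at this ⊢
        exact this
    · intro n hn F hF c hc
      refine ⟨hface n F hF c hc.1 a, fun ω => ?_⟩
      by_cases hω : ω ∈ F
      · simp only [faceModify, if_pos hω, Set.mem_preimage, Set.mem_singleton_iff, hgfix]
        exact hc.2 ω
      · simp only [faceModify, if_neg hω]
        exact hc.2 ω
  refine ⟨hmem, ?_⟩
  intro a k hk u hu z
  obtain ⟨huh, hufix, hutr⟩ := hu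
  set y := g z with hy
  set n := s + k with hn
  set F : Set (Fin n → Bool) := {ω | ∀ i : Fin s, ω (Fin.castAdd k i) = true} with hF
  set F' : Set (Fin n → Bool) := {ω | ∀ i : Fin k, ω (Fin.natAdd s i) = true} with hF'
  have hFc : IsFaceOfCodim F s := by
    refine ⟨(Finset.univ : Finset (Fin s)).map ⟨Fin.castAdd k, ?_⟩,
      fun _ => true, by simp, ?_⟩
    · intro i j h
      have := congrArg Fin.val h
      simp only [Fin.castAdd, Fin.castLE] at this
      exact Fin.ext (by omega)
    · ext ω
      simp only [hF, Set.mem_setOf_eq, Finset.mem_map, Finset.mem_univ, true_and,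
        Function.Embedding.coeFn_mk]
      constructor
      · rintro h i ⟨j, rfl⟩
        exact h j
      · intro h i
        exact h _ ⟨i, rfl⟩
  have hF'c : IsFaceOfCodim F' k := by
    refine ⟨(Finset.univ : Finset (Fin k)).map ⟨Fin.natAdd s, ?_⟩,
      fun _ => true, by simp, ?_⟩
    · intro i j h
      have := congrArg Fin.val h
      simp only [Fin.natAdd] at this
      exact Fin.ext (by omega)
    · ext ω
      simp only [hF', Set.mem_setOf_eq, Finset.mem_map, Finset.mem_univ, true_and,
        Function.Embedding.coeFn_mk]
      constructor
      · rintro h i ⟨j, rfl⟩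
        exact h j
      · intro h i
        exact h _ ⟨i, rfl⟩
  have hFF' : ∀ ω : Fin n → Bool, ω ∈ F → ω ∈ F' → ω = topVtx n := by
    intro ω h1 h2
    funext j
    refine Fin.addCases (motive := fun j => ω j = topVtx n j)
      (fun i => ?_) (fun i => ?_) j
    · exact h1 i
    · exact h2 i
  have hD : (fun _ : Fin n → Bool => z) ∈ (subFamily S (g ⁻¹' {y})).cubes n :=
    ⟨aux_const_cube hS n z, fun _ => rfl⟩
  set E1 := faceModify F (fun w => a • w) (fun _ : Fin n → Bool => z) with hE1
  have hE1mem : E1 ∈ (subFamily S (g ⁻¹' {y})).cubes n := by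
    refine ⟨hface n F hFc _ (aux_const_cube hS n z) a, fun ω => ?_⟩
    by_cases hω : ω ∈ F
    · simp only [hE1, faceModify, if_pos hω, Set.mem_preimage, Set.mem_singleton_iff]
      exact hgfix a z
    · simp only [hE1, faceModify, if_neg hω, Set.mem_preimage, Set.mem_singleton_iff]
      rfl
  set D1 := faceModify F' u E1 with hD1
  have hD1mem : D1 ∈ S.cubes n :=
    ((hutr y).2 n (by omega) F' hF'c E1 hE1mem).1
  set E2 := faceModify F' u (fun _ : Fin n → Bool => z) with hE2
  have hE2mem : E2 ∈ (subFamily S (g ⁻¹' {y})).cubes n :=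
    (hutr y).2 n (by omega) F' hF'c _ hD
  set D2 := faceModify F (fun w => a • w) E2 with hD2
  have hD2mem : D2 ∈ S.cubes n := hface n F hFc E2 hE2mem.1 a
  have hagree : ∀ ω, ω ≠ topVtx n → D1 ω = D2 ω := by
    intro ω hω
    by_cases h1 : ω ∈ F <;> by_cases h2 : ω ∈ F'
    · exact absurd (hFF' ω h1 h2) hω
    · simp [hD1, hD2, hE1, hE2, faceModify, h1, h2]
    · simp [hD1, hD2, hE1, hE2, faceModify, h1, h2]
    · simp [hD1, hD2, hE1, hE2, faceModify, h1, h2]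
  have himg : (fun ω => g (D1 ω)) = fun ω => g (D2 ω) := by
    funext ω
    by_cases h1 : ω ∈ F <;> by_cases h2 : ω ∈ F' <;>
      simp [hD1, hD2, hE1, hE2, faceModify, h1, h2, hgfix, hufix]
  have heq := huniq' n (by omega) D1 hD1mem D2 hD2mem hagree himg
  have htop := congrFun heq (topVtx n)
  have htF : topVtx n ∈ F := fun i => rfl
  have htF' : topVtx n ∈ F' := fun i => rfl
  simp only [hD1, hD2, hE1, hE2, faceModify, if_pos htF, if_pos htF'] at htop
  exact htop.symm
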